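/- Let f : ℝ^d × ℝ^d → ℝ^d satisfy, for constants L₁, L₂ > 0 and q > 0: (i) |f(x,y) - f(x',y')|² ≤ L₁(1 + |x-y|^{2q} + |x'-y'|^{2q})|(x-x')-(y-y')|²; (ii) |f(x,y)|x'-y'|^q - f(x',y')|x-y|^q|² ≤ L₂(1 + |x-y|^{2q} + |x'-y'|^{2q} + |x-y|^{2q}|x'-y'|^{2q})|(x-x')-(y-y')|², for all x,x',y,y' ∈ ℝ^d. Let f^n(x,y) := f(x,y)/(1+n^{-1/2}|x-y|^q). Then for all n ≥ 1 and all x,x',y,y', |f^n(x,y) - f^n(x',y')|² ≤ 4n · max{L₁, L₂} · |(x-x')-(y-y')|². -/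

import Mathlib

set_option maxHeartbeats 1000000


theorem stmt12 (d : ℕ)
    (f : EuclideanSpace ℝ (Fin d) → EuclideanSpace ℝ (Fin d) → EuclideanSpace ℝ (Fin d))
    (L₁ L₂ q : ℝ) (hL₁ : 0 < L₁) (hL₂ : 0 < L₂) (hq : 0 < q)
    (h1 : ∀ x x' y y' : EuclideanSpace ℝ (Fin d),
      ‖f x y - f x' y'‖ ^ 2
        ≤ L₁ * (1 + ‖x - y‖ ^ (2 * q) + ‖x' - y'‖ ^ (2 * q)) * ‖(x - x') - (y - y')‖ ^ 2)
    (h2 : ∀ x x' y y' : EuclideanSpace ℝ (Fin d),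
      ‖(‖x' - y'‖ ^ q) • f x y - (‖x - y‖ ^ q) • f x' y'‖ ^ 2
        ≤ L₂ * (1 + ‖x - y‖ ^ (2 * q) + ‖x' - y'‖ ^ (2 * q)
              + ‖x - y‖ ^ (2 * q) * ‖x' - y'‖ ^ (2 * q)) * ‖(x - x') - (y - y')‖ ^ 2) :
    ∀ n : ℕ, 1 ≤ n → ∀ x x' y y' : EuclideanSpace ℝ (Fin d),
      ‖(1 + (n : ℝ) ^ (-(1/2) : ℝ) * ‖x - y‖ ^ q)⁻¹ • f x y
          - (1 + (n : ℝ) ^ (-(1/2) : ℝ) * ‖x' - y'‖ ^ q)⁻¹ • f x' y'‖ ^ 2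
        ≤ 4 * (n : ℝ) * max L₁ L₂ * ‖(x - x') - (y - y')‖ ^ 2 := by
  intro n hn x x' y y'
  set N : ℝ := (n : ℝ) with hNdef
  have hN1 : (1:ℝ) ≤ N := Nat.one_le_cast.2 hn
  have hN0 : (0:ℝ) < N := lt_of_lt_of_le one_pos hN1
  set ε : ℝ := N ^ (-(1/2) : ℝ) with hεdef
  have hε0 : 0 < ε := Real.rpow_pos_of_pos hN0 _
  have hε2 : ε ^ 2 = N⁻¹ := by
    rw [hεdef, ← Real.rpow_natCast (N ^ (-(1/2):ℝ)) 2, ← Real.rpow_mul hN0.le]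
    norm_num
    exact Real.rpow_neg_one N
  set a : ℝ := ‖x - y‖ ^ q with hadef
  set b : ℝ := ‖x' - y'‖ ^ q with hbdef
  have ha0 : 0 ≤ a := Real.rpow_nonneg (norm_nonneg _) _
  have hb0 : 0 ≤ b := Real.rpow_nonneg (norm_nonneg _) _
  have hpowA : ‖x - y‖ ^ (2*q) = a ^ 2 := by
    rw [hadef, mul_comm, Real.rpow_mul (norm_nonneg _),
      ← Real.rpow_natCast (‖x - y‖ ^ q) 2]
    norm_num
  have hpowB : ‖x' - y'‖ ^ (2*q) = b ^ 2 := by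
    rw [hbdef, mul_comm, Real.rpow_mul (norm_nonneg _),
      ← Real.rpow_natCast (‖x' - y'‖ ^ q) 2]
    norm_num
  set u : EuclideanSpace ℝ (Fin d) := f x y with hu
  set v : EuclideanSpace ℝ (Fin d) := f x' y' with hv
  set Δ : ℝ := ‖(x - x') - (y - y')‖ with hΔ
  have hp0 : 0 < 1 + ε * a := by positivity
  have hr0 : 0 < 1 + ε * b := by positivity
  have hD0 : 0 < (1 + ε * a) * (1 + ε * b) := mul_pos hp0 hr0
  have key : (1 + ε * a)⁻¹ • u - (1 + ε * b)⁻¹ • v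
      = ((1 + ε * a) * (1 + ε * b))⁻¹ • ((u - v) + ε • (b • u - a • v)) := by
    match_scalars
    all_goals field_simp
    all_goals ring
  have h1' := h1 x x' y y'
  have h2' := h2 x x' y y'
  rw [hpowA, hpowB] at h1' h2'
  rw [← hu, ← hv, ← hΔ] at h1'
  rw [← hadef, ← hbdef, ← hu, ← hv, ← hΔ] at h2'
  rw [key, norm_smul, Real.norm_eq_abs, abs_of_pos (inv_pos.2 hD0), mul_pow]
  have hεn : ‖ε • (b • u - a • v)‖ = ε * ‖b • u - a • v‖ := by
    rw [norm_smul, Real.norm_eq_abs, abs_of_pos hε0]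
  have hW : ‖(u - v) + ε • (b • u - a • v)‖ ^ 2
      ≤ 2 * ‖u - v‖ ^ 2 + 2 * (ε ^ 2 * ‖b • u - a • v‖ ^ 2) := by
    have htri := norm_add_le (u - v) (ε • (b • u - a • v))
    have h0 := norm_nonneg ((u - v) + ε • (b • u - a • v))
    nlinarith [sq_nonneg (‖u - v‖ - ‖ε • (b • u - a • v)‖), hεn,
      norm_nonneg (u - v), norm_nonneg (ε • (b • u - a • v))]
  set M : ℝ := max L₁ L₂ with hM
  have hM0 : 0 < M := lt_max_of_lt_left hL₁
  have hML1 : L₁ ≤ M := le_max_left _ _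
  have hML2 : L₂ ≤ M := le_max_right _ _
  have hm1 : ε ^ 2 ≤ 1 := by
    rw [hε2]
    exact inv_le_one_of_one_le₀ hN1
  have hfA : 1 + ε ^ 2 * a ^ 2 ≤ (1 + ε * a) ^ 2 := by
    have hr : (1 + ε * a) ^ 2 = 1 + 2 * (ε * a) + ε ^ 2 * a ^ 2 := by ring
    have := mul_nonneg hε0.le ha0
    linarith
  have hfB : 1 + ε ^ 2 * b ^ 2 ≤ (1 + ε * b) ^ 2 := by
    have hr : (1 + ε * b) ^ 2 = 1 + 2 * (ε * b) + ε ^ 2 * b ^ 2 := by ring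
    have := mul_nonneg hε0.le hb0
    linarith
  have hDlow : (1 + ε ^ 2 * a ^ 2) * (1 + ε ^ 2 * b ^ 2) ≤ (1 + ε * a) ^ 2 * (1 + ε * b) ^ 2 :=
    mul_le_mul hfA hfB (by positivity) (by positivity)
  have expand : 4 * N * M * ((1 + ε ^ 2 * a ^ 2) * (1 + ε ^ 2 * b ^ 2))
      = 4 * N * M + 4 * M * a ^ 2 + 4 * M * b ^ 2 + 4 * ε ^ 2 * M * (a ^ 2 * b ^ 2) := by
    rw [hε2]
    field_simp
    ring
  have coeff : 2 * (L₁ * (1 + a ^ 2 + b ^ 2))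
      + 2 * (ε ^ 2 * (L₂ * (1 + a ^ 2 + b ^ 2 + a ^ 2 * b ^ 2)))
      ≤ 4 * N * M * ((1 + ε * a) ^ 2 * (1 + ε * b) ^ 2) := by
    have lin : 2 * (L₁ * (1 + a ^ 2 + b ^ 2))
        + 2 * (ε ^ 2 * (L₂ * (1 + a ^ 2 + b ^ 2 + a ^ 2 * b ^ 2)))
        ≤ 4 * N * M + 4 * M * a ^ 2 + 4 * M * b ^ 2 + 4 * ε ^ 2 * M * (a ^ 2 * b ^ 2) := by
      nlinarith [mul_nonneg (sub_nonneg.2 hML1) (by positivity : (0:ℝ) ≤ 1 + a ^ 2 + b ^ 2),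
        mul_nonneg (mul_nonneg (sq_nonneg ε) (sub_nonneg.2 hML2))
          (by positivity : (0:ℝ) ≤ 1 + a ^ 2 + b ^ 2 + a ^ 2 * b ^ 2),
        mul_nonneg (mul_nonneg (sub_nonneg.2 hm1) hM0.le) (sq_nonneg a),
        mul_nonneg (mul_nonneg (sub_nonneg.2 hm1) hM0.le) (sq_nonneg b),
        mul_nonneg (mul_nonneg (sq_nonneg ε) hM0.le) (mul_nonneg (sq_nonneg a) (sq_nonneg b)),
        mul_nonneg (sub_nonneg.2 hN1) hM0.le,
        mul_nonneg (sub_nonneg.2 (hm1.trans hN1)) hM0.le]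
    calc 2 * (L₁ * (1 + a ^ 2 + b ^ 2))
        + 2 * (ε ^ 2 * (L₂ * (1 + a ^ 2 + b ^ 2 + a ^ 2 * b ^ 2)))
        ≤ 4 * N * M * ((1 + ε ^ 2 * a ^ 2) * (1 + ε ^ 2 * b ^ 2)) := by rw [expand]; exact lin
      _ ≤ 4 * N * M * ((1 + ε * a) ^ 2 * (1 + ε * b) ^ 2) := by
          apply mul_le_mul_of_nonneg_left hDlow (by positivity)
  have hinv : (((1 + ε * a) * (1 + ε * b))⁻¹) ^ 2 * ((1 + ε * a) ^ 2 * (1 + ε * b) ^ 2) = 1 := by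
    field_simp
  calc (((1 + ε * a) * (1 + ε * b))⁻¹) ^ 2 * ‖(u - v) + ε • (b • u - a • v)‖ ^ 2
      ≤ (((1 + ε * a) * (1 + ε * b))⁻¹) ^ 2
        * (2 * ‖u - v‖ ^ 2 + 2 * (ε ^ 2 * ‖b • u - a • v‖ ^ 2)) := by
        apply mul_le_mul_of_nonneg_left hW (by positivity)
    _ ≤ (((1 + ε * a) * (1 + ε * b))⁻¹) ^ 2
        * (2 * (L₁ * (1 + a ^ 2 + b ^ 2) * Δ ^ 2)
          + 2 * (ε ^ 2 * (L₂ * (1 + a ^ 2 + b ^ 2 + a ^ 2 * b ^ 2) * Δ ^ 2))) := by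
        apply mul_le_mul_of_nonneg_left _ (by positivity)
        gcongr
    _ = (((1 + ε * a) * (1 + ε * b))⁻¹) ^ 2
        * ((2 * (L₁ * (1 + a ^ 2 + b ^ 2))
          + 2 * (ε ^ 2 * (L₂ * (1 + a ^ 2 + b ^ 2 + a ^ 2 * b ^ 2)))) * Δ ^ 2) := by ring
    _ ≤ (((1 + ε * a) * (1 + ε * b))⁻¹) ^ 2
        * ((4 * N * M * ((1 + ε * a) ^ 2 * (1 + ε * b) ^ 2)) * Δ ^ 2) := by
        apply mul_le_mul_of_nonneg_left _ (by positivity)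
        exact mul_le_mul_of_nonneg_right coeff (sq_nonneg Δ)
    _ = 4 * N * M * Δ ^ 2
        * ((((1 + ε * a) * (1 + ε * b))⁻¹) ^ 2 * ((1 + ε * a) ^ 2 * (1 + ε * b) ^ 2)) := by ring
    _ = 4 * N * M * Δ ^ 2 := by rw [hinv, mul_one]
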